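/- Let g : ℝ^{r₁} × ℝ^{r₂} → ℝ be a measurable version of the regression function of Y on (X, M) in the treated group (E[1{T=1} Y h(X,M)] = E[1{T=1} g(X,M) h(X,M)] for all bounded measurable h). Define η(x) = ∫_ℳ g(x, m) f_{M|T,X}(m|0,x) dm and θ₀ = ∫_𝒳 η(x) f_X(x) dx, and define the efficient influence function S = 1{T=1} · ( f_{M|T,X}(M|0,X) / ( f_{T|X}(1|X) f_{M|T,X}(M|1,X) ) ) · (Y − g(X,M)) + 1{T=0} / f_{T|X}(0|X) · ( g(X,M) − η(X) ) + η(X) − θ₀. Assume each of the three summands is integrable. Then E[S] = 0. -/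

import Mathlib

open MeasureTheory ProbabilityTheory Filter
open scoped NNReal ENNReal Topology

lemma count_bool_eq : (Measure.count : Measure Bool) = Measure.dirac true + Measure.dirac false := by
  ext s hs
  rw [Measure.count, Measure.sum_apply _ hs, tsum_bool, Measure.add_apply, add_comm]

lemma count_prod_eq {α : Type*} [MeasurableSpace α] (ρ : Measure α) [SFinite ρ] :
    (Measure.count : Measure Bool).prod ρ
      = ρ.map (Prod.mk true) + ρ.map (Prod.mk false) := by
  rw [count_bool_eq, Measure.add_prod, Measure.dirac_prod, Measure.dirac_prod]

lemma transfer_aux {α : Type*} [MeasurableSpace α] {Ω : Type*} [MeasurableSpace Ω]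
    (P : Measure Ω) [IsProbabilityMeasure P]
    (φ : Ω → Bool × α) (hφ : Measurable φ) (ρ : Measure α) [SFinite ρ]
    (D : Bool × α → ℝ) (hD : Measurable D) (hDpos : ∀ p, 0 ≤ D p)
    (hlaw : P.map φ
      = ((Measure.count : Measure Bool).prod ρ).withDensity (fun p => ENNReal.ofReal (D p)))
    (F : Bool × α → ℝ) (hF : Measurable F) (hFi : Integrable (fun ω => F (φ ω)) P) :
    Integrable (fun y => D (true, y) * F (true, y)) ρ ∧
    Integrable (fun y => D (false, y) * F (false, y)) ρ ∧
    ∫ ω, F (φ ω) ∂P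
      = (∫ y, D (true, y) * F (true, y) ∂ρ) + ∫ y, D (false, y) * F (false, y) ∂ρ := by
  have hFmap : Integrable F (P.map φ) :=
    (integrable_map_measure hF.aestronglyMeasurable hφ.aemeasurable).2 hFi
  set DN : Bool × α → NNReal := fun p => (D p).toNNReal with hDN
  have hDNmeas : Measurable DN := hD.real_toNNReal
  have hof : (fun p => ENNReal.ofReal (D p)) = fun p => ((DN p : ℝ≥0) : ℝ≥0∞) := rfl
  have hcoe : ∀ p, ((DN p : ℝ≥0) : ℝ) = D p := fun p => Real.coe_toNNReal _ (hDpos p)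
  rw [hlaw, hof] at hFmap
  have hGi : Integrable (fun p => D p * F p) ((Measure.count : Measure Bool).prod ρ) := by
    have := (integrable_withDensity_iff_integrable_coe_smul hDNmeas).1 hFmap
    refine this.congr (Filter.Eventually.of_forall fun p => ?_)
    simp [hcoe p, NNReal.smul_def, smul_eq_mul]
  have hint_eq : ∫ ω, F (φ ω) ∂P = ∫ p, D p * F p ∂(Measure.count : Measure Bool).prod ρ := by
    rw [← integral_map hφ.aemeasurable hF.aestronglyMeasurable, hlaw, hof,
      integral_withDensity_eq_integral_smul hDNmeas]
    congr 1; funext p; simp [hcoe p, NNReal.smul_def, smul_eq_mul]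
  rw [count_prod_eq ρ] at hGi
  have h1 : Integrable (fun p => D p * F p) (ρ.map (Prod.mk true)) :=
    (integrable_add_measure.1 hGi).1
  have h2 : Integrable (fun p => D p * F p) (ρ.map (Prod.mk false)) :=
    (integrable_add_measure.1 hGi).2
  have hm : Measurable fun p : Bool × α => D p * F p := hD.mul hF
  have e1 : Integrable (fun y => D (true, y) * F (true, y)) ρ :=
    (integrable_map_measure hm.aestronglyMeasurable measurable_prodMk_left.aemeasurable).1 h1
  have e2 : Integrable (fun y => D (false, y) * F (false, y)) ρ :=
    (integrable_map_measure hm.aestronglyMeasurable measurable_prodMk_left.aemeasurable).1 h2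
  refine ⟨e1, e2, ?_⟩
  rw [hint_eq, count_prod_eq ρ, integral_add_measure h1 h2,
    integral_map measurable_prodMk_left.aemeasurable hm.aestronglyMeasurable,
    integral_map measurable_prodMk_left.aemeasurable hm.aestronglyMeasurable]

lemma density_integrable {α : Type*} [MeasurableSpace α] {Ω : Type*} [MeasurableSpace Ω]
    (P : Measure Ω) [IsProbabilityMeasure P]
    (φ : Ω → Bool × α) (hφ : Measurable φ) (ρ : Measure α) [SFinite ρ]
    (D : Bool × α → ℝ) (hD : Measurable D) (hDpos : ∀ p, 0 ≤ D p)
    (hlaw : P.map φ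
      = ((Measure.count : Measure Bool).prod ρ).withDensity (fun p => ENNReal.ofReal (D p))) :
    Integrable (fun y => D (true, y)) ρ ∧ Integrable (fun y => D (false, y)) ρ := by
  have hDi : Integrable D ((Measure.count : Measure Bool).prod ρ) := by
    refine ⟨hD.aestronglyMeasurable, ?_⟩
    rw [hasFiniteIntegral_def]
    have : ∀ p, ‖D p‖ₑ = ENNReal.ofReal (D p) := fun p =>
      Real.enorm_eq_ofReal (hDpos p)
    rw [lintegral_congr this]
    have h1 : ∫⁻ p, ENNReal.ofReal (D p) ∂((Measure.count : Measure Bool).prod ρ)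
        = (P.map φ) Set.univ := by
      rw [hlaw, withDensity_apply _ MeasurableSet.univ, Measure.restrict_univ]
    rw [h1]
    have : IsProbabilityMeasure (P.map φ) := Measure.isProbabilityMeasure_map hφ.aemeasurable
    simp [this.measure_univ]
  rw [count_prod_eq ρ] at hDi
  constructor
  · exact (integrable_map_measure hD.aestronglyMeasurable
      measurable_prodMk_left.aemeasurable).1 (integrable_add_measure.1 hDi).1
  · exact (integrable_map_measure hD.aestronglyMeasurable
      measurable_prodMk_left.aemeasurable).1 (integrable_add_measure.1 hDi).2

/-- the efficient influence function `S_{θ₀}` has mean zero: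
`E[1{T=1}·(f_{M|T,X}(M|0,X)/(f_{T|X}(1|X) f_{M|T,X}(M|1,X)))·(Y − g(X,M))
  + 1{T=0}/f_{T|X}(0|X)·(g(X,M) − η(X)) + η(X) − θ₀] = 0`. -/
theorem eif_mean_zero
    {Ω : Type*} [MeasurableSpace Ω] (P : Measure Ω) [IsProbabilityMeasure P]
    (r₁ r₂ : ℕ)
    (T : Ω → Bool) (X : Ω → (Fin r₁ → ℝ)) (M : Ω → (Fin r₂ → ℝ)) (Y : Ω → ℝ)
    (hT : Measurable T) (hX : Measurable X) (hM : Measurable M) (hY : Measurable Y)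
    (hYint : Integrable Y P)
    -- the joint law of (T, X, M) has a strictly positive density f
    (f : Bool → (Fin r₁ → ℝ) → (Fin r₂ → ℝ) → ℝ)
    (hf_meas : Measurable (fun p : Bool × (Fin r₁ → ℝ) × (Fin r₂ → ℝ) => f p.1 p.2.1 p.2.2))
    (hf_pos : ∀ t x m, 0 < f t x m)
    (hlaw : P.map (fun ω => (T ω, X ω, M ω)) =
      ((Measure.count : Measure Bool).prod
        ((volume : Measure (Fin r₁ → ℝ)).prod (volume : Measure (Fin r₂ → ℝ)))).withDensity
        (fun p => ENNReal.ofReal (f p.1 p.2.1 p.2.2)))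
    -- conditional densities
    (fX : (Fin r₁ → ℝ) → ℝ)
    (hfX : ∀ x, fX x = (∫ m, f true x m) + (∫ m, f false x m))
    (fTX : Bool → (Fin r₁ → ℝ) → ℝ)
    (hfTX : ∀ t x, fTX t x = (∫ m, f t x m) / fX x)
    (fMTX : (Fin r₂ → ℝ) → Bool → (Fin r₁ → ℝ) → ℝ)
    (hfMTX : ∀ m t x, fMTX m t x = f t x m / (∫ m', f t x m'))
    -- g is a measurable version of the regression function of Y on (X,M) among the treated
    (g : (Fin r₁ → ℝ) → (Fin r₂ → ℝ) → ℝ) (hg : Measurable (Function.uncurry g))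
    (hreg : ∀ h : (Fin r₁ → ℝ) × (Fin r₂ → ℝ) → ℝ, Measurable h → (∃ C, ∀ p, |h p| ≤ C) →
      ∫ ω, (if T ω then Y ω * h (X ω, M ω) else 0) ∂P
        = ∫ ω, (if T ω then g (X ω) (M ω) * h (X ω, M ω) else 0) ∂P)
    -- η and θ₀
    (η : (Fin r₁ → ℝ) → ℝ) (hη : ∀ x, η x = ∫ m, g x m * fMTX m false x)
    (θ₀ : ℝ) (hθ₀ : θ₀ = ∫ x, η x * fX x)
    -- the efficient influence function
    (S : Ω → ℝ)
    (hS : ∀ ω, S ω =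
      (if T ω then
        fMTX (M ω) false (X ω) / (fTX true (X ω) * fMTX (M ω) true (X ω))
          * (Y ω - g (X ω) (M ω))
      else 0)
      + (if T ω then 0 else (g (X ω) (M ω) - η (X ω)) / fTX false (X ω))
      + (η (X ω) - θ₀))
    -- each of the three summands is integrable
    (hint1 : Integrable (fun ω =>
      if T ω then
        fMTX (M ω) false (X ω) / (fTX true (X ω) * fMTX (M ω) true (X ω))
          * (Y ω - g (X ω) (M ω))
      else 0) P)
    (hint2 : Integrable (fun ω =>
      if T ω then 0 else (g (X ω) (M ω) - η (X ω)) / fTX false (X ω)) P)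
    (hint3 : Integrable (fun ω => η (X ω) - θ₀) P) :
    ∫ ω, S ω ∂P = 0 := by
  -- notation
  have hφ : Measurable (fun ω => (T ω, X ω, M ω) : Ω → Bool × ((Fin r₁ → ℝ) × (Fin r₂ → ℝ))) :=
    hT.prodMk (hX.prodMk hM)
  have hD : Measurable (fun p : Bool × (Fin r₁ → ℝ) × (Fin r₂ → ℝ) => f p.1 p.2.1 p.2.2) :=
    hf_meas
  have hDpos : ∀ p : Bool × (Fin r₁ → ℝ) × (Fin r₂ → ℝ), 0 ≤ f p.1 p.2.1 p.2.2 :=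
    fun p => (hf_pos _ _ _).le
  -- measurability of basic objects
  have hsec : ∀ t : Bool, Measurable (fun y : (Fin r₁ → ℝ) × (Fin r₂ → ℝ) => f t y.1 y.2) :=
    fun t => hD.comp measurable_prodMk_left
  have hI : ∀ t : Bool, Measurable (fun x => ∫ m, f t x m) := fun t =>
    ((hsec t).stronglyMeasurable.integral_prod_right').measurable
  have hfXm : Measurable fX := by
    have h : fX = fun x => (∫ m, f true x m) + ∫ m, f false x m := funext hfX
    rw [h]; exact (hI true).add (hI false)
  have hfTXm : ∀ t, Measurable (fTX t) := by
    intro t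
    have h : fTX t = fun x => (∫ m, f t x m) / fX x := funext fun x => hfTX t x
    rw [h]; exact (hI t).div hfXm
  have hfMTXm : ∀ t : Bool,
      Measurable (fun y : (Fin r₁ → ℝ) × (Fin r₂ → ℝ) => fMTX y.2 t y.1) := by
    intro t
    have h : (fun y : (Fin r₁ → ℝ) × (Fin r₂ → ℝ) => fMTX y.2 t y.1)
        = fun y => f t y.1 y.2 / ∫ m', f t y.1 m' := funext fun y => hfMTX y.2 t y.1
    rw [h]; exact (hsec t).div ((hI t).comp measurable_fst)
  have hηm : Measurable η := by
    have h : η = fun x => ∫ m,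
        (fun y : (Fin r₁ → ℝ) × (Fin r₂ → ℝ) => g y.1 y.2 * fMTX y.2 false y.1) (x, m) :=
      funext fun x => hη x
    rw [h]
    exact ((hg.mul (hfMTXm false)).stronglyMeasurable.integral_prod_right').measurable
  -- density sections are integrable, a.e.
  obtain ⟨hDt, hDf⟩ := density_integrable P _ hφ
    ((volume : Measure (Fin r₁ → ℝ)).prod (volume : Measure (Fin r₂ → ℝ)))
    _ hD hDpos hlaw
  have hsecT : ∀ᵐ x ∂(volume : Measure (Fin r₁ → ℝ)),
      Integrable (fun m => f true x m) (volume : Measure (Fin r₂ → ℝ)) := hDt.prod_right_ae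
  have hsecF : ∀ᵐ x ∂(volume : Measure (Fin r₁ → ℝ)),
      Integrable (fun m => f false x m) (volume : Measure (Fin r₂ → ℝ)) := hDf.prod_right_ae
  have hpos_int : ∀ (t : Bool) (x : Fin r₁ → ℝ),
      Integrable (fun m => f t x m) (volume : Measure (Fin r₂ → ℝ)) → 0 < ∫ m, f t x m := by
    intro t x hx
    refine (integral_pos_iff_support_of_nonneg (fun m => (hf_pos t x m).le) hx).2 ?_
    have hsupp : Function.support (fun m => f t x m) = Set.univ :=
      Set.eq_univ_of_forall fun m => (hf_pos t x m).ne'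
    rw [hsupp]
    exact isOpen_univ.measure_pos _ Set.univ_nonempty
  ----------------------------------------------------------------
  -- Part C : ∫ (η ∘ X - θ₀) = 0
  ----------------------------------------------------------------
  have hηXint : Integrable (fun ω => η (X ω)) P := by
    have h := hint3.add (integrable_const θ₀)
    exact h.congr (Filter.Eventually.of_forall fun ω => by
      simp only [Pi.add_apply]; ring)
  have hFCm : Measurable (fun p : Bool × (Fin r₁ → ℝ) × (Fin r₂ → ℝ) => η p.2.1) :=
    hηm.comp (measurable_fst.comp measurable_snd)
  obtain ⟨c1, c2, hceq⟩ := transfer_aux P _ hφ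
    ((volume : Measure (Fin r₁ → ℝ)).prod (volume : Measure (Fin r₂ → ℝ)))
    _ hD hDpos hlaw (fun p => η p.2.1) hFCm hηXint
  have c1' : Integrable (fun y : (Fin r₁ → ℝ) × (Fin r₂ → ℝ) => f true y.1 y.2 * η y.1)
      ((volume : Measure (Fin r₁ → ℝ)).prod (volume : Measure (Fin r₂ → ℝ))) := c1
  have c2' : Integrable (fun y : (Fin r₁ → ℝ) × (Fin r₂ → ℝ) => f false y.1 y.2 * η y.1)
      ((volume : Measure (Fin r₁ → ℝ)).prod (volume : Measure (Fin r₂ → ℝ))) := c2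
  have hceq' : ∫ ω, η (X ω) ∂P
      = (∫ y : (Fin r₁ → ℝ) × (Fin r₂ → ℝ), f true y.1 y.2 * η y.1
          ∂((volume : Measure (Fin r₁ → ℝ)).prod (volume : Measure (Fin r₂ → ℝ))))
        + ∫ y : (Fin r₁ → ℝ) × (Fin r₂ → ℝ), f false y.1 y.2 * η y.1
          ∂((volume : Measure (Fin r₁ → ℝ)).prod (volume : Measure (Fin r₂ → ℝ))) := hceq
  have hC : ∫ ω, (η (X ω) - θ₀) ∂P = 0 := by
    rw [integral_sub hηXint (integrable_const θ₀), integral_const, probReal_univ,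
      one_smul]
    have int1 : Integrable (fun x => (∫ m, f true x m) * η x) (volume : Measure (Fin r₁ → ℝ)) := by
      have h := c1'.integral_prod_left
      refine h.congr (Filter.Eventually.of_forall fun x => ?_)
      show (∫ m, f true x m * η x) = (∫ m, f true x m) * η x
      exact integral_mul_const _ _
    have int2 : Integrable (fun x => (∫ m, f false x m) * η x)
        (volume : Measure (Fin r₁ → ℝ)) := by
      have h := c2'.integral_prod_left
      refine h.congr (Filter.Eventually.of_forall fun x => ?_)
      show (∫ m, f false x m * η x) = (∫ m, f false x m) * η x
      exact integral_mul_const _ _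
    have h1 : ∫ ω, η (X ω) ∂P = θ₀ := by
      rw [hceq', integral_prod _ c1', integral_prod _ c2']
      have g1 : (fun x => ∫ m, f true x m * η x) = fun x => (∫ m, f true x m) * η x :=
        funext fun x => integral_mul_const _ _
      have g2 : (fun x => ∫ m, f false x m * η x) = fun x => (∫ m, f false x m) * η x :=
        funext fun x => integral_mul_const _ _
      rw [show (∫ x, ∫ m, f true x m * η x) = ∫ x, (∫ m, f true x m) * η x by rw [g1],
        show (∫ x, ∫ m, f false x m * η x) = ∫ x, (∫ m, f false x m) * η x by rw [g2],
        ← integral_add int1 int2, hθ₀]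
      congr 1; funext x; rw [hfX x]; ring
    rw [h1, sub_self]
  ----------------------------------------------------------------
  -- Part B : ∫ (1{T=0}(g - η)/fTX false) = 0
  ----------------------------------------------------------------
  have hFBm : Measurable (fun p : Bool × (Fin r₁ → ℝ) × (Fin r₂ → ℝ) =>
      if p.1 then 0 else (g p.2.1 p.2.2 - η p.2.1) / fTX false p.2.1) := by
    refine Measurable.ite ?_ measurable_const ?_
    · exact measurable_fst (measurableSet_singleton true)
    · exact ((hg.comp measurable_snd).sub
        (hηm.comp (measurable_fst.comp measurable_snd))).div
        ((hfTXm false).comp (measurable_fst.comp measurable_snd))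
  obtain ⟨b1, b2, hbeq⟩ := transfer_aux P _ hφ
    ((volume : Measure (Fin r₁ → ℝ)).prod (volume : Measure (Fin r₂ → ℝ)))
    _ hD hDpos hlaw
    (fun p => if p.1 then 0 else (g p.2.1 p.2.2 - η p.2.1) / fTX false p.2.1) hFBm hint2
  have b2' : Integrable (fun y : (Fin r₁ → ℝ) × (Fin r₂ → ℝ) =>
      f false y.1 y.2 * ((g y.1 y.2 - η y.1) / fTX false y.1))
      ((volume : Measure (Fin r₁ → ℝ)).prod (volume : Measure (Fin r₂ → ℝ))) := b2
  have hbeq' : ∫ ω, (if T ω then 0 else (g (X ω) (M ω) - η (X ω)) / fTX false (X ω)) ∂P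
      = (∫ y : (Fin r₁ → ℝ) × (Fin r₂ → ℝ), f true y.1 y.2 * (0 : ℝ)
          ∂((volume : Measure (Fin r₁ → ℝ)).prod (volume : Measure (Fin r₂ → ℝ))))
        + ∫ y : (Fin r₁ → ℝ) × (Fin r₂ → ℝ),
            f false y.1 y.2 * ((g y.1 y.2 - η y.1) / fTX false y.1)
          ∂((volume : Measure (Fin r₁ → ℝ)).prod (volume : Measure (Fin r₂ → ℝ))) := hbeq
  have hB : ∫ ω, (if T ω then 0 else (g (X ω) (M ω) - η (X ω)) / fTX false (X ω)) ∂P = 0 := by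
    rw [hbeq']
    have hz1 : (∫ y : (Fin r₁ → ℝ) × (Fin r₂ → ℝ), f true y.1 y.2 * (0 : ℝ)
        ∂((volume : Measure (Fin r₁ → ℝ)).prod (volume : Measure (Fin r₂ → ℝ)))) = 0 := by
      simp
    rw [hz1, zero_add, integral_prod _ b2']
    have hae : ∀ᵐ x ∂(volume : Measure (Fin r₁ → ℝ)),
        (∫ m, f false x m * ((g x m - η x) / fTX false x)) = 0 := by
      filter_upwards [hsecT, hsecF, b2'.prod_right_ae] with x hxT hxF hxB
      have hItpos := hpos_int true x hxT
      have hI0pos := hpos_int false x hxF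
      have hfXpos : 0 < fX x := by rw [hfX x]; positivity
      have hcpos : 0 < fTX false x := by
        rw [hfTX false x]; exact div_pos hI0pos hfXpos
      have hcne : fTX false x ≠ 0 := hcpos.ne'
      have hI0ne : (∫ m, f false x m) ≠ 0 := hI0pos.ne'
      -- integrability of m ↦ f false x m * (g x m - η x)
      have h1 : Integrable (fun m => f false x m * (g x m - η x))
          (volume : Measure (Fin r₂ → ℝ)) := by
        have h := hxB.mul_const (fTX false x)
        refine h.congr (Filter.Eventually.of_forall fun m => ?_)
        field_simp
      have hgf : Integrable (fun m => g x m * f false x m)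
          (volume : Measure (Fin r₂ → ℝ)) := by
        have h := h1.add (hxF.const_mul (η x))
        refine h.congr (Filter.Eventually.of_forall fun m => ?_)
        simp only [Pi.add_apply]; ring
      -- value of η x
      have hηx : η x * (∫ m, f false x m) = ∫ m, g x m * f false x m := by
        have e : η x = (∫ m, g x m * f false x m) / ∫ m, f false x m := by
          rw [hη x]
          rw [show (fun m => g x m * fMTX m false x)
              = fun m => (g x m * f false x m) / ∫ m', f false x m' from
            funext fun m => by rw [hfMTX m false x]; ring]
          exact integral_div _ _
        rw [e, div_mul_cancel₀ _ hI0ne]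
      -- conclude
      have e2 : (fun m => f false x m * ((g x m - η x) / fTX false x))
          = fun m => (f false x m * (g x m - η x)) / fTX false x :=
        funext fun m => by ring
      rw [e2, integral_div]
      have e3 : (∫ m, f false x m * (g x m - η x)) = 0 := by
        have hfg : Integrable (fun m => f false x m * g x m)
            (volume : Measure (Fin r₂ → ℝ)) := by
          refine hgf.congr (Filter.Eventually.of_forall fun m => ?_); ring
        have hfη : Integrable (fun m => f false x m * η x)
            (volume : Measure (Fin r₂ → ℝ)) := hxF.mul_const (η x)
        have : (fun m => f false x m * (g x m - η x))
            = fun m => f false x m * g x m - f false x m * η x :=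
          funext fun m => by ring
        rw [this, integral_sub hfg hfη, integral_mul_const]
        have : (∫ m, f false x m * g x m) = ∫ m, g x m * f false x m := by
          congr 1; funext m; ring
        rw [this, ← hηx]; ring
      rw [e3, zero_div]
    rw [integral_congr_ae hae]
    simp
  ----------------------------------------------------------------
  -- Part A : ∫ (1{T=1} w (Y - g)) = 0  via truncation + DCT
  ----------------------------------------------------------------
  have hA : ∫ ω, (if T ω then
      fMTX (M ω) false (X ω) / (fTX true (X ω) * fMTX (M ω) true (X ω))
        * (Y ω - g (X ω) (M ω)) else 0) ∂P = 0 := by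
    set w : (Fin r₁ → ℝ) × (Fin r₂ → ℝ) → ℝ :=
      fun p => fMTX p.2 false p.1 / (fTX true p.1 * fMTX p.2 true p.1) with hwdef
    have hwm : Measurable w :=
      (hfMTXm false).div (((hfTXm true).comp measurable_fst).mul (hfMTXm true))
    have hwnn : ∀ p, 0 ≤ w p := by
      intro p
      have h0 : 0 ≤ fMTX p.2 false p.1 := by
        rw [hfMTX]
        exact div_nonneg (hf_pos _ _ _).le (integral_nonneg fun m => (hf_pos _ _ _).le)
      have h1 : 0 ≤ fTX true p.1 := by
        rw [hfTX]
        refine div_nonneg (integral_nonneg fun m => (hf_pos _ _ _).le) ?_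
        rw [hfX]
        exact add_nonneg (integral_nonneg fun m => (hf_pos _ _ _).le)
          (integral_nonneg fun m => (hf_pos _ _ _).le)
      have h2 : 0 ≤ fMTX p.2 true p.1 := by
        rw [hfMTX]
        exact div_nonneg (hf_pos _ _ _).le (integral_nonneg fun m => (hf_pos _ _ _).le)
      exact div_nonneg h0 (mul_nonneg h1 h2)
    -- truncations
    set h : ℕ → (Fin r₁ → ℝ) × (Fin r₂ → ℝ) → ℝ :=
      fun n p => if w p ≤ n ∧ |g p.1 p.2| ≤ n then w p else 0 with hhdef
    have hhm : ∀ n, Measurable (h n) := by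
      intro n
      refine Measurable.ite ?_ hwm measurable_const
      have : {p : (Fin r₁ → ℝ) × (Fin r₂ → ℝ) | w p ≤ n ∧ |g p.1 p.2| ≤ n}
          = {p | w p ≤ n} ∩ {p | |g p.1 p.2| ≤ n} := rfl
      rw [this]
      exact (measurableSet_le hwm measurable_const).inter
        (measurableSet_le hg.abs measurable_const)
    have hhb : ∀ n p, |h n p| ≤ (n : ℝ) := by
      intro n p
      by_cases hc : w p ≤ n ∧ |g p.1 p.2| ≤ n
      · rw [hhdef]; simp only [if_pos hc]
        rw [abs_of_nonneg (hwnn p)]; exact hc.1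
      · rw [hhdef]; simp only [if_neg hc, abs_zero]
        positivity
    have hh_le_w : ∀ n p, |h n p| ≤ w p := by
      intro n p
      by_cases hc : w p ≤ n ∧ |g p.1 p.2| ≤ n
      · rw [hhdef]; simp only [if_pos hc]; rw [abs_of_nonneg (hwnn p)]
      · rw [hhdef]; simp only [if_neg hc, abs_zero]; exact hwnn p
    -- integrability of the truncated pieces
    have IntY : ∀ n : ℕ, Integrable (fun ω => if T ω then Y ω * h n (X ω, M ω) else 0) P := by
      intro n
      refine Integrable.mono' (hYint.norm.const_mul (n : ℝ)) ?_ ?_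
      · exact ((hY.mul ((hhm n).comp (hX.prodMk hM))).ite
          (hT (measurableSet_singleton true)) measurable_const).aestronglyMeasurable
      · refine Filter.Eventually.of_forall fun ω => ?_
        by_cases htω : T ω
        · simp only [if_pos htω]
          rw [Real.norm_eq_abs, abs_mul]
          calc |Y ω| * |h n (X ω, M ω)| ≤ |Y ω| * n :=
                mul_le_mul_of_nonneg_left (hhb n _) (abs_nonneg _)
            _ = (n : ℝ) * ‖Y ω‖ := by rw [Real.norm_eq_abs]; ring
        · simp only [if_neg htω, norm_zero]
          positivity
    have Intg : ∀ n : ℕ, Integrable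
        (fun ω => if T ω then g (X ω) (M ω) * h n (X ω, M ω) else 0) P := by
      intro n
      refine Integrable.mono' (integrable_const ((n : ℝ) * n)) ?_ ?_
      · exact (((hg.comp (hX.prodMk hM)).mul ((hhm n).comp (hX.prodMk hM))).ite
          (hT (measurableSet_singleton true)) measurable_const).aestronglyMeasurable
      · refine Filter.Eventually.of_forall fun ω => ?_
        by_cases htω : T ω
        · simp only [if_pos htω]
          rw [Real.norm_eq_abs, abs_mul]
          by_cases hc : w (X ω, M ω) ≤ n ∧ |g (X ω) (M ω)| ≤ n
          · calc |g (X ω) (M ω)| * |h n (X ω, M ω)| ≤ (n : ℝ) * n :=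
                mul_le_mul hc.2 (hhb n _) (abs_nonneg _) (Nat.cast_nonneg n)
            _ = (n : ℝ) * n := rfl
          · rw [hhdef]; simp only [if_neg hc, abs_zero, mul_zero]
            positivity
        · simp only [if_neg htω, norm_zero]
          positivity
    -- each truncated integral vanishes
    have Zn : ∀ n : ℕ, ∫ ω,
        (if T ω then (Y ω - g (X ω) (M ω)) * h n (X ω, M ω) else 0) ∂P = 0 := by
      intro n
      have split : (fun ω => if T ω then (Y ω - g (X ω) (M ω)) * h n (X ω, M ω) else 0)
          = fun ω => (if T ω then Y ω * h n (X ω, M ω) else 0)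
            - (if T ω then g (X ω) (M ω) * h n (X ω, M ω) else 0) := by
        funext ω; by_cases htω : T ω
        · simp only [if_pos htω]; ring
        · simp only [if_neg htω]; ring
      rw [split, integral_sub (IntY n) (Intg n),
        hreg (h n) (hhm n) ⟨(n : ℝ), hhb n⟩, sub_self]
    -- dominated convergence
    have hTend : Tendsto (fun n : ℕ => ∫ ω,
        (if T ω then (Y ω - g (X ω) (M ω)) * h n (X ω, M ω) else 0) ∂P) atTop
        (𝓝 (∫ ω, (if T ω then w (X ω, M ω) * (Y ω - g (X ω) (M ω)) else 0) ∂P)) := by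
      refine tendsto_integral_of_dominated_convergence
        (fun ω => ‖if T ω then w (X ω, M ω) * (Y ω - g (X ω) (M ω)) else 0‖)
        (fun n => (((hY.sub (hg.comp (hX.prodMk hM))).mul
          ((hhm n).comp (hX.prodMk hM))).ite
          (hT (measurableSet_singleton true)) measurable_const).aestronglyMeasurable)
        hint1.norm ?_ ?_
      · intro n
        refine Filter.Eventually.of_forall fun ω => ?_
        by_cases htω : T ω
        · simp only [if_pos htω]
          rw [Real.norm_eq_abs, Real.norm_eq_abs, abs_mul, abs_mul]
          rw [abs_of_nonneg (hwnn _)]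
          calc |Y ω - g (X ω) (M ω)| * |h n (X ω, M ω)|
              ≤ |Y ω - g (X ω) (M ω)| * w (X ω, M ω) :=
                mul_le_mul_of_nonneg_left (hh_le_w n _) (abs_nonneg _)
            _ = w (X ω, M ω) * |Y ω - g (X ω) (M ω)| := by ring
        · simp only [if_neg htω, norm_zero]; exact le_refl _
      · refine Filter.Eventually.of_forall fun ω => ?_
        obtain ⟨N₁, hN₁⟩ := exists_nat_ge (w (X ω, M ω))
        obtain ⟨N₂, hN₂⟩ := exists_nat_ge (|g (X ω) (M ω)|)
        refine tendsto_const_nhds.congr' ?_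
        rw [Filter.eventuallyEq_iff_exists_mem]
        refine ⟨{n | max N₁ N₂ ≤ n}, Filter.mem_atTop _, fun n hn => ?_⟩
        have hn1 : (N₁ : ℝ) ≤ n := by exact_mod_cast le_trans (le_max_left _ _) hn
        have hn2 : (N₂ : ℝ) ≤ n := by exact_mod_cast le_trans (le_max_right _ _) hn
        have hc : w (X ω, M ω) ≤ (n : ℝ) ∧ |g (X ω) (M ω)| ≤ (n : ℝ) :=
          ⟨le_trans hN₁ hn1, le_trans hN₂ hn2⟩
        have : h n (X ω, M ω) = w (X ω, M ω) := by rw [hhdef]; simp only [if_pos hc]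
        by_cases htω : T ω
        · simp only [if_pos htω, this]; ring
        · simp only [if_neg htω]
    have hzero : Tendsto (fun _ : ℕ => (0 : ℝ)) atTop
        (𝓝 (∫ ω, (if T ω then w (X ω, M ω) * (Y ω - g (X ω) (M ω)) else 0) ∂P)) := by
      refine hTend.congr fun n => Zn n
    have := tendsto_nhds_unique hzero tendsto_const_nhds
    exact this
  ----------------------------------------------------------------
  -- assemble
  ----------------------------------------------------------------
  have hsum : ∫ ω, S ω ∂P =
      (∫ ω, (if T ω then
        fMTX (M ω) false (X ω) / (fTX true (X ω) * fMTX (M ω) true (X ω))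
          * (Y ω - g (X ω) (M ω)) else 0) ∂P)
      + (∫ ω, (if T ω then 0 else (g (X ω) (M ω) - η (X ω)) / fTX false (X ω)) ∂P)
      + ∫ ω, (η (X ω) - θ₀) ∂P := by
    simp only [hS]
    have h12 : Integrable (fun ω =>
        (if T ω then
          fMTX (M ω) false (X ω) / (fTX true (X ω) * fMTX (M ω) true (X ω))
            * (Y ω - g (X ω) (M ω)) else 0)
        + (if T ω then 0 else (g (X ω) (M ω) - η (X ω)) / fTX false (X ω))) P :=
      hint1.add hint2
    rw [integral_add h12 hint3, integral_add hint1 hint2]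
  rw [hsum, hA, hB, hC]
  ring
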